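/- Let V₁, V₂ be subspaces of a finite-dimensional complex inner product space E and set W := V₂ ∩ V₁⊥. Then for every z ∈ ℂ the algebraic identity T_{V₂}(z) ∘ T_{V₁}(z) = T_{V₂ ∩ W⊥}(z) ∘ T_{W + V₁}(z) holds, where W + V₁ denotes the subspace sum. -/

import Mathlib

noncomputable def projL {E : Type*} [NormedAddCommGroup E] [InnerProductSpace ℂ E]
    [FiniteDimensional ℂ E] (V : Submodule ℂ E) : E →ₗ[ℂ] E :=
  V.subtype ∘ₗ (V.orthogonalProjectionOnto).toLinearMap

noncomputable def TV {E : Type*} [NormedAddCommGroup E] [InnerProductSpace ℂ E]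
    [FiniteDimensional ℂ E] (V : Submodule ℂ E) (z : ℂ) : E →ₗ[ℂ] E :=
  z • projL V + projL Vᗮ

open scoped InnerProductSpace

variable {E : Type*} [NormedAddCommGroup E] [InnerProductSpace ℂ E] [FiniteDimensional ℂ E]

lemma projL_apply (V : Submodule ℂ E) (x : E) :
    projL V x = (V.orthogonalProjectionOnto x : E) := rfl

lemma projL_add_orth (V : Submodule ℂ E) :
    projL V + projL Vᗮ = LinearMap.id := by
  ext x
  simpa [projL_apply] using Submodule.starProjection_add_starProjection_orthogonal V x

lemma TV_eq (V : Submodule ℂ E) (z : ℂ) :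
    TV V z = (z - 1) • projL V + LinearMap.id := by
  rw [TV, ← projL_add_orth V, sub_smul, one_smul]
  abel

lemma projL_sup (U V : Submodule ℂ E) (h : U ≤ Vᗮ) :
    projL (U ⊔ V) = projL U + projL V := by
  ext x
  have hmem : (U.orthogonalProjectionOnto x : E) + (V.orthogonalProjectionOnto x : E) ∈ U ⊔ V :=
    Submodule.add_mem_sup (U.orthogonalProjectionOnto x).2 (V.orthogonalProjectionOnto x).2
  refine Submodule.eq_starProjection_of_mem_orthogonal hmem ?_
  rw [Submodule.mem_orthogonal]
  intro u hu
  rw [Submodule.mem_sup] at hu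
  obtain ⟨a, ha, b, hb, rfl⟩ := hu
  have h1 : ⟪a, x - (U.orthogonalProjectionOnto x : E)⟫_ℂ = 0 :=
    (Submodule.sub_starProjection_mem_orthogonal (K := U) x) a ha
  have h2 : ⟪b, x - (V.orthogonalProjectionOnto x : E)⟫_ℂ = 0 :=
    (Submodule.sub_starProjection_mem_orthogonal (K := V) x) b hb
  have h3 : ⟪a, (V.orthogonalProjectionOnto x : E)⟫_ℂ = 0 :=
    (Submodule.mem_orthogonal' V a).mp (h ha) _ (V.orthogonalProjectionOnto x).2
  have h4 : ⟪b, (U.orthogonalProjectionOnto x : E)⟫_ℂ = 0 :=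
    (h (U.orthogonalProjectionOnto x).2) b hb
  rw [inner_sub_right, sub_eq_zero] at h1 h2
  simp only [LinearMap.add_apply, projL_apply, inner_add_right, inner_add_left, inner_sub_right, h3, h4,
    ← h1, ← h2]
  ring
lemma projL_comp_zero (U V : Submodule ℂ E) (h : V ≤ Uᗮ) :
    projL U ∘ₗ projL V = 0 := by
  ext x
  simp only [LinearMap.comp_apply, projL_apply, LinearMap.zero_apply]
  rw [Submodule.orthogonalProjectionOnto_apply_of_mem_orthogonal
    (h (V.orthogonalProjectionOnto x).2)]
  simp

theorem TV_lemma32 (V₁ V₂ : Submodule ℂ E) (z : ℂ) :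
    TV V₂ z ∘ₗ TV V₁ z = TV (V₂ ⊓ (V₂ ⊓ V₁ᗮ)ᗮ) z ∘ₗ TV ((V₂ ⊓ V₁ᗮ) ⊔ V₁) z := by
  set W := V₂ ⊓ V₁ᗮ with hW
  set A := V₂ ⊓ Wᗮ with hA
  have hWA : W ≤ Aᗮ := by
    refine le_trans (Submodule.le_orthogonal_orthogonal W) (Submodule.orthogonal_le ?_)
    exact inf_le_right
  have hWV1 : W ≤ V₁ᗮ := inf_le_right
  have h2 : projL V₂ = projL W + projL A := by
    rw [← projL_sup W A hWA]
    congr 1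
    rw [hA, inf_comm]
    exact (Submodule.sup_orthogonal_inf_of_hasOrthogonalProjection (inf_le_left : W ≤ V₂)).symm
  have hB : projL (W ⊔ V₁) = projL W + projL V₁ := projL_sup W V₁ hWV1
  have hAW : projL A ∘ₗ projL W = 0 := projL_comp_zero A W hWA
  have hW1 : projL W ∘ₗ projL V₁ = 0 := projL_comp_zero W V₁ (by
    exact le_trans (Submodule.le_orthogonal_orthogonal V₁) (Submodule.orthogonal_le hWV1))
  rw [TV_eq, TV_eq, TV_eq, TV_eq, h2, hB]
  simp only [LinearMap.add_comp, LinearMap.comp_add, LinearMap.smul_comp,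
    LinearMap.comp_smul, smul_add, LinearMap.comp_id, LinearMap.id_comp,
    hAW, hW1, LinearMap.comp_zero, smul_zero]
  abel
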